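/- Let F : [0,1]² → ℝ be continuous and let μ* be a doubly stochastic measure on [0,1]² that maximizes ∫ F dμ over all doubly stochastic measures μ on [0,1]². Let C(x,y) = μ*([0,x]×[0,y]) be the associated copula. Suppose [X₁,X₂]×[Y₁,Y₂] ⊆ [0,1]² is a rectangle with C(X₂,Y₂) + C(X₁,Y₁) − C(X₁,Y₂) − C(X₂,Y₁) > 0, and suppose that at every point (x,y) of the open rectangle (X₁,X₂)×(Y₁,Y₂) the mixed second partial derivative ∂²F/∂x∂y exists and is strictly positive. Then for every (x,y) ∈ [X₁,X₂]×[Y₁,Y₂] one has C(x,y) = min( C(x,Y₂) + C(X₁,y) − C(X₁,Y₂), C(x,Y₁) + C(X₂,y) − C(X₂,Y₁) ). -/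

import Mathlib

open MeasureTheory Set

/-- A doubly stochastic measure on `[0,1]²`: a Borel probability measure whose
marginals on both coordinates are Lebesgue measure on `[0,1]`. -/
def IsDoublyStochastic (μ : Measure (ℝ × ℝ)) : Prop :=
  IsProbabilityMeasure μ ∧
  (∀ B : Set ℝ, MeasurableSet B → B ⊆ Icc 0 1 → μ (B ×ˢ Icc (0:ℝ) 1) = volume B) ∧
  (∀ B : Set ℝ, MeasurableSet B → B ⊆ Icc 0 1 → μ (Icc (0:ℝ) 1 ×ˢ B) = volume B)

/-- The copula (distribution function) of a measure on `[0,1]²`. -/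
noncomputable def copulaOf (μ : Measure (ℝ × ℝ)) (x y : ℝ) : ℝ :=
  (μ (Icc 0 x ×ˢ Icc 0 y)).toReal

lemma supermod {F : ℝ × ℝ → ℝ} {X₁ X₂ Y₁ Y₂ : ℝ}
    (hD2 : ∀ x y, x ∈ Ioo X₁ X₂ → y ∈ Ioo Y₁ Y₂ →
      DifferentiableAt ℝ (fun x' => F (x', y)) x ∧
      DifferentiableAt ℝ (fun y' => deriv (fun x' => F (x', y')) x) y ∧
      0 < deriv (fun y' => deriv (fun x' => F (x', y')) x) y)
    {x₁ x₂ y₁ y₂ : ℝ} (hx₁ : x₁ ∈ Ioo X₁ X₂) (hx₂ : x₂ ∈ Ioo X₁ X₂)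
    (hy₁ : y₁ ∈ Ioo Y₁ Y₂) (hy₂ : y₂ ∈ Ioo Y₁ Y₂) (h12 : x₁ < x₂) (h21 : y₂ < y₁) :
    F (x₁, y₁) + F (x₂, y₂) < F (x₁, y₂) + F (x₂, y₁) := by
  have hsub : Icc x₁ x₂ ⊆ Ioo X₁ X₂ := fun u hu => ⟨lt_of_lt_of_le hx₁.1 hu.1, lt_of_le_of_lt hu.2 hx₂.2⟩
  set φ : ℝ → ℝ := fun u => F (u, y₁) - F (u, y₂) with hφ
  set φ' : ℝ → ℝ := fun u => deriv (fun u' => F (u', y₁)) u - deriv (fun u' => F (u', y₂)) u with hφ'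
  have hder : ∀ u ∈ Ioo x₁ x₂, HasDerivAt φ (φ' u) u := by
    intro u hu
    have hu' : u ∈ Ioo X₁ X₂ := hsub (Ioo_subset_Icc_self hu)
    exact ((hD2 u y₁ hu' hy₁).1.hasDerivAt).sub ((hD2 u y₂ hu' hy₂).1.hasDerivAt)
  have hcont : ContinuousOn φ (Icc x₁ x₂) := by
    intro u hu
    have hu' : u ∈ Ioo X₁ X₂ := hsub hu
    exact (((hD2 u y₁ hu' hy₁).1.sub (hD2 u y₂ hu' hy₂).1).continuousAt).continuousWithinAt
  obtain ⟨c, hc, hceq⟩ := exists_hasDerivAt_eq_slope φ φ' h12 hcont hder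
  have hc' : c ∈ Ioo X₁ X₂ := hsub (Ioo_subset_Icc_self hc)
  set g : ℝ → ℝ := fun v => deriv (fun u => F (u, v)) c with hg
  have hysub : Icc y₂ y₁ ⊆ Ioo Y₁ Y₂ := fun v hv => ⟨lt_of_lt_of_le hy₂.1 hv.1, lt_of_le_of_lt hv.2 hy₁.2⟩
  have hgmono : StrictMonoOn g (Icc y₂ y₁) := by
    apply strictMonoOn_of_deriv_pos (convex_Icc _ _)
    · intro v hv
      exact ((hD2 c v hc' (hysub hv)).2.1.continuousAt).continuousWithinAt
    · intro v hv
      rw [interior_Icc] at hv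
      exact (hD2 c v hc' (hysub (Ioo_subset_Icc_self hv))).2.2
  have hglt : g y₂ < g y₁ := hgmono (left_mem_Icc.2 h21.le) (right_mem_Icc.2 h21.le) h21
  have hpos : 0 < φ' c := sub_pos.2 hglt
  rw [hceq] at hpos
  have : 0 < φ x₂ - φ x₁ := by
    have := mul_pos hpos (sub_pos.2 h12)
    rwa [div_mul_cancel₀] at this
    exact ne_of_gt (sub_pos.2 h12)
  simp only [hφ] at this
  linarith

lemma ds_sq {μ : Measure (ℝ × ℝ)} (h : IsDoublyStochastic μ) :
    μ (Icc (0:ℝ) 1 ×ˢ Icc (0:ℝ) 1) = 1 := by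
  rw [h.2.1 (Icc 0 1) measurableSet_Icc subset_rfl, Real.volume_Icc]
  norm_num

lemma ds_sq_compl {μ : Measure (ℝ × ℝ)} (h : IsDoublyStochastic μ) :
    μ (Icc (0:ℝ) 1 ×ˢ Icc (0:ℝ) 1)ᶜ = 0 := by
  have := h.1
  rw [measure_compl (measurableSet_Icc.prod measurableSet_Icc) (measure_ne_top μ _), ds_sq h,
    measure_univ]
  simp

lemma ds_vline {μ : Measure (ℝ × ℝ)} (h : IsDoublyStochastic μ) {c : ℝ}
    (hc : c ∈ Icc (0:ℝ) 1) : μ ({c} ×ˢ (univ : Set ℝ)) = 0 := by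
  have h1 : μ ({c} ×ˢ Icc (0:ℝ) 1) = 0 := by
    rw [h.2.1 {c} (measurableSet_singleton c) (singleton_subset_iff.2 hc)]
    simp
  have h2 : μ ({c} ×ˢ (Icc (0:ℝ) 1)ᶜ) = 0 := by
    refine measure_mono_null ?_ (ds_sq_compl h)
    intro p hp
    simp only [mem_prod, mem_singleton_iff, mem_compl_iff] at hp ⊢
    exact fun hmem => hp.2 hmem.2
  have : {c} ×ˢ (univ : Set ℝ) ⊆ ({c} ×ˢ Icc (0:ℝ) 1) ∪ ({c} ×ˢ (Icc (0:ℝ) 1)ᶜ) := by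
    intro p hp
    simp only [mem_prod, mem_singleton_iff, mem_union, mem_compl_iff] at hp ⊢
    by_cases hm : p.2 ∈ Icc (0:ℝ) 1
    · exact Or.inl ⟨hp.1, hm⟩
    · exact Or.inr ⟨hp.1, hm⟩
  exact measure_mono_null this (measure_union_null h1 h2)

lemma ds_hline {μ : Measure (ℝ × ℝ)} (h : IsDoublyStochastic μ) {c : ℝ}
    (hc : c ∈ Icc (0:ℝ) 1) : μ ((univ : Set ℝ) ×ˢ {c}) = 0 := by
  have h1 : μ (Icc (0:ℝ) 1 ×ˢ {c}) = 0 := by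
    rw [h.2.2 {c} (measurableSet_singleton c) (singleton_subset_iff.2 hc)]
    simp
  have h2 : μ ((Icc (0:ℝ) 1)ᶜ ×ˢ {c}) = 0 := by
    refine measure_mono_null ?_ (ds_sq_compl h)
    intro p hp
    simp only [mem_prod, mem_singleton_iff, mem_compl_iff] at hp ⊢
    exact fun hmem => hp.1 hmem.1
  have : (univ : Set ℝ) ×ˢ {c} ⊆ (Icc (0:ℝ) 1 ×ˢ {c}) ∪ ((Icc (0:ℝ) 1)ᶜ ×ˢ {c}) := by
    intro p hp
    simp only [mem_prod, mem_singleton_iff, mem_union, mem_compl_iff] at hp ⊢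
    by_cases hm : p.1 ∈ Icc (0:ℝ) 1
    · exact Or.inl ⟨hm, hp.2⟩
    · exact Or.inr ⟨hm, hp.2⟩
  exact measure_mono_null this (measure_union_null h1 h2)

lemma ds_rect {μ : Measure (ℝ × ℝ)} (h : IsDoublyStochastic μ) {a b c d : ℝ}
    (ha : 0 ≤ a) (hab : a ≤ b) (hc : 0 ≤ c) (hcd : c ≤ d) :
    (μ (Ioc a b ×ˢ Ioc c d)).toReal =
      copulaOf μ b d - copulaOf μ a d - copulaOf μ b c + copulaOf μ a c := by
  have := h.1
  have hXsplit : Icc (0:ℝ) b = Icc 0 a ∪ Ioc a b := (Icc_union_Ioc_eq_Icc ha hab).symm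
  have hYsplit : Icc (0:ℝ) d = Icc 0 c ∪ Ioc c d := (Icc_union_Ioc_eq_Icc hc hcd).symm
  have hdX : Disjoint (Icc (0:ℝ) a) (Ioc a b) := by
    rw [Set.disjoint_left]; intro u hu hu'; exact absurd hu.2 (not_le.2 hu'.1)
  have hdY : Disjoint (Icc (0:ℝ) c) (Ioc c d) := by
    rw [Set.disjoint_left]; intro u hu hu'; exact absurd hu.2 (not_le.2 hu'.1)
  -- split along x
  have e1 : ∀ T : Set ℝ, MeasurableSet T →
      μ (Icc (0:ℝ) b ×ˢ T) = μ (Icc (0:ℝ) a ×ˢ T) + μ (Ioc a b ×ˢ T) := by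
    intro T hT
    rw [hXsplit, union_prod]
    exact measure_union (Set.disjoint_prod.mpr (Or.inl hdX)) (measurableSet_Ioc.prod hT)
  have e2 : ∀ S : Set ℝ, MeasurableSet S →
      μ (S ×ˢ Icc (0:ℝ) d) = μ (S ×ˢ Icc (0:ℝ) c) + μ (S ×ˢ Ioc c d) := by
    intro S hS
    rw [hYsplit, prod_union]
    exact measure_union (Set.disjoint_prod.mpr (Or.inr hdY)) (hS.prod measurableSet_Ioc)
  have k1 : μ (Icc (0:ℝ) b ×ˢ Icc 0 d) =
      μ (Icc (0:ℝ) a ×ˢ Icc 0 d) + (μ (Ioc a b ×ˢ Icc 0 c) + μ (Ioc a b ×ˢ Ioc c d)) := by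
    rw [e1 _ measurableSet_Icc, e2 _ measurableSet_Ioc]
  have k2 : μ (Icc (0:ℝ) b ×ˢ Icc 0 c) = μ (Icc (0:ℝ) a ×ˢ Icc 0 c) + μ (Ioc a b ×ˢ Icc 0 c) :=
    e1 _ measurableSet_Icc
  have fin : ∀ S : Set (ℝ × ℝ), μ S ≠ ⊤ := fun S => measure_ne_top μ S
  unfold copulaOf
  have t1 : (μ (Icc (0:ℝ) b ×ˢ Icc 0 d)).toReal
      = (μ (Icc (0:ℝ) a ×ˢ Icc 0 d)).toReal +
        ((μ (Ioc a b ×ˢ Icc 0 c)).toReal + (μ (Ioc a b ×ˢ Ioc c d)).toReal) := by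
    rw [k1, ENNReal.toReal_add (fin _) (ENNReal.add_ne_top.2 ⟨fin _, fin _⟩),
      ENNReal.toReal_add (fin _) (fin _)]
  have t2 : (μ (Icc (0:ℝ) b ×ˢ Icc 0 c)).toReal
      = (μ (Icc (0:ℝ) a ×ˢ Icc 0 c)).toReal + (μ (Ioc a b ×ˢ Icc 0 c)).toReal := by
    rw [k2, ENNReal.toReal_add (fin _) (fin _)]
  linarith

lemma exists_better (G : ℝ × ℝ → ℝ) (hGc : Continuous G) (M : ℝ) (hM : ∀ p, |G p| ≤ M)
    (μ : Measure (ℝ × ℝ)) (hds : IsDoublyStochastic μ)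
    (Q₁ Q₂ : Set (ℝ × ℝ)) (hm₁ : MeasurableSet Q₁) (hm₂ : MeasurableSet Q₂)
    (hs₁ : Q₁ ⊆ Icc 0 1 ×ˢ Icc 0 1) (hs₂ : Q₂ ⊆ Icc 0 1 ×ˢ Icc 0 1)
    (hdisj : Disjoint Q₁ Q₂)
    (ha : 0 < μ Q₁) (hb : 0 < μ Q₂)
    (hgain : ∀ p ∈ Q₁, ∀ q ∈ Q₂, G p + G q < G (p.1, q.2) + G (q.1, p.2)) :
    ∃ ν, IsDoublyStochastic ν ∧ ∫ p, G p ∂μ < ∫ p, G p ∂ν := by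
  haveI : IsProbabilityMeasure μ := hds.1
  set a := μ Q₁ with ha'
  set b := μ Q₂ with hb'
  have haT : a ≠ ⊤ := measure_ne_top μ _
  have hbT : b ≠ ⊤ := measure_ne_top μ _
  have ha0 : a ≠ 0 := ha.ne'
  have hb0 : b ≠ 0 := hb.ne'
  set t := min a b with ht'
  have ht0 : t ≠ 0 := (lt_min ha hb).ne'
  have htT : t ≠ ⊤ := ne_top_of_le_ne_top haT (min_le_left _ _)
  have hta : t ≤ a := min_le_left _ _
  have htb : t ≤ b := min_le_right _ _
  set α : Measure (ℝ × ℝ) := a⁻¹ • μ.restrict Q₁ with hα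
  set β : Measure (ℝ × ℝ) := b⁻¹ • μ.restrict Q₂ with hβ
  haveI hαP : IsProbabilityMeasure α := by
    constructor
    simp [hα, Measure.restrict_apply_univ, ENNReal.inv_mul_cancel ha0 haT]
    exact ENNReal.inv_mul_cancel ha0 haT
  haveI hβP : IsProbabilityMeasure β := by
    constructor
    simp [hβ, Measure.restrict_apply_univ, ENNReal.inv_mul_cancel hb0 hbT]
    exact ENNReal.inv_mul_cancel hb0 hbT
  have hαap : ∀ S : Set (ℝ × ℝ), MeasurableSet S → α S = a⁻¹ * μ (S ∩ Q₁) := by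
    intro S hS
    simp [hα, Measure.restrict_apply hS]
  have hβap : ∀ S : Set (ℝ × ℝ), MeasurableSet S → β S = b⁻¹ * μ (S ∩ Q₂) := by
    intro S hS
    simp [hβ, Measure.restrict_apply hS]
  have hαQ : α Q₁ = 1 := by rw [hαap Q₁ hm₁]; simp [ENNReal.inv_mul_cancel ha0 haT]; exact ENNReal.inv_mul_cancel ha0 haT
  have hβQ : β Q₂ = 1 := by rw [hβap Q₂ hm₂]; simp [ENNReal.inv_mul_cancel hb0 hbT]; exact ENNReal.inv_mul_cancel hb0 hbT
  set ν₁ : Measure ℝ := α.map Prod.fst with hν₁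
  set η₁ : Measure ℝ := α.map Prod.snd with hη₁
  set ν₂ : Measure ℝ := β.map Prod.fst with hν₂
  set η₂ : Measure ℝ := β.map Prod.snd with hη₂
  haveI : IsProbabilityMeasure ν₁ := Measure.isProbabilityMeasure_map measurable_fst.aemeasurable
  haveI : IsProbabilityMeasure η₁ := Measure.isProbabilityMeasure_map measurable_snd.aemeasurable
  haveI : IsProbabilityMeasure ν₂ := Measure.isProbabilityMeasure_map measurable_fst.aemeasurable
  haveI : IsProbabilityMeasure η₂ := Measure.isProbabilityMeasure_map measurable_snd.aemeasurable
  set ν : Measure (ℝ × ℝ) := μ.restrict (Q₁ ∪ Q₂)ᶜ + (a - t) • α + (b - t) • β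
    + t • (ν₁.prod η₂) + t • (ν₂.prod η₁) with hν
  -- generic apply formula
  have hνap : ∀ S : Set (ℝ × ℝ), MeasurableSet S → ν S =
      μ (S ∩ (Q₁ ∪ Q₂)ᶜ) + (a - t) * α S + (b - t) * β S
        + t * (ν₁.prod η₂) S + t * (ν₂.prod η₁) S := by
    intro S hS
    simp [hν, Measure.add_apply, Measure.smul_apply, smul_eq_mul, Measure.restrict_apply hS,
      add_assoc]
  -- decomposition
  have hdecomp : ∀ S : Set (ℝ × ℝ), MeasurableSet S →
      μ (S ∩ (Q₁ ∪ Q₂)ᶜ) + μ (S ∩ Q₁) + μ (S ∩ Q₂) = μ S := by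
    intro S hS
    have h1 : μ (S ∩ Q₁) + μ (S ∩ Q₂) = μ (S ∩ (Q₁ ∪ Q₂)) := by
      rw [inter_union_distrib_left]
      exact (measure_union (hdisj.mono inter_subset_right inter_subset_right)
        (hS.inter hm₂)).symm
    have h2 : μ (S ∩ (Q₁ ∪ Q₂)) + μ (S \ (Q₁ ∪ Q₂)) = μ S :=
      measure_inter_add_diff S (hm₁.union hm₂)
    rw [diff_eq] at h2
    calc μ (S ∩ (Q₁ ∪ Q₂)ᶜ) + μ (S ∩ Q₁) + μ (S ∩ Q₂)
        = μ (S ∩ (Q₁ ∪ Q₂)ᶜ) + (μ (S ∩ Q₁) + μ (S ∩ Q₂)) := by ring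
      _ = μ (S ∩ (Q₁ ∪ Q₂)ᶜ) + μ (S ∩ (Q₁ ∪ Q₂)) := by rw [h1]
      _ = μ S := by rw [add_comm]; exact h2
  have hQ₁sub : Q₁ ⊆ (univ : Set ℝ) ×ˢ Icc (0:ℝ) 1 := fun p hp => ⟨trivial, (hs₁ hp).2⟩
  have hQ₂sub : Q₂ ⊆ (univ : Set ℝ) ×ˢ Icc (0:ℝ) 1 := fun p hp => ⟨trivial, (hs₂ hp).2⟩
  have hQ₁sub' : Q₁ ⊆ Icc (0:ℝ) 1 ×ˢ (univ : Set ℝ) := fun p hp => ⟨(hs₁ hp).1, trivial⟩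
  have hQ₂sub' : Q₂ ⊆ Icc (0:ℝ) 1 ×ˢ (univ : Set ℝ) := fun p hp => ⟨(hs₂ hp).1, trivial⟩
  -- marginal values of the product pieces
  have hν₁ap : ∀ B : Set ℝ, MeasurableSet B → ν₁ B = a⁻¹ * μ ((B ×ˢ (univ : Set ℝ)) ∩ Q₁) := by
    intro B hB
    rw [hν₁, Measure.map_apply measurable_fst hB,
      show Prod.fst ⁻¹' B = B ×ˢ (univ : Set ℝ) from (Set.prod_univ).symm,
      hαap _ (hB.prod MeasurableSet.univ)]
  have hν₂ap : ∀ B : Set ℝ, MeasurableSet B → ν₂ B = b⁻¹ * μ ((B ×ˢ (univ : Set ℝ)) ∩ Q₂) := by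
    intro B hB
    rw [hν₂, Measure.map_apply measurable_fst hB,
      show Prod.fst ⁻¹' B = B ×ˢ (univ : Set ℝ) from (Set.prod_univ).symm,
      hβap _ (hB.prod MeasurableSet.univ)]
  have hη₁ap : ∀ B : Set ℝ, MeasurableSet B → η₁ B = a⁻¹ * μ (((univ : Set ℝ) ×ˢ B) ∩ Q₁) := by
    intro B hB
    rw [hη₁, Measure.map_apply measurable_snd hB,
      show Prod.snd ⁻¹' B = (univ : Set ℝ) ×ˢ B from (Set.univ_prod).symm,
      hαap _ (MeasurableSet.univ.prod hB)]
  have hη₂ap : ∀ B : Set ℝ, MeasurableSet B → η₂ B = b⁻¹ * μ (((univ : Set ℝ) ×ˢ B) ∩ Q₂) := by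
    intro B hB
    rw [hη₂, Measure.map_apply measurable_snd hB,
      show Prod.snd ⁻¹' B = (univ : Set ℝ) ×ˢ B from (Set.univ_prod).symm,
      hβap _ (MeasurableSet.univ.prod hB)]
  have hν₁I : ν₁ (Icc 0 1) = 1 := by
    refine le_antisymm prob_le_one ?_
    rw [hν₁, Measure.map_apply measurable_fst measurableSet_Icc]
    calc (1:ENNReal) = α Q₁ := hαQ.symm
      _ ≤ α (Prod.fst ⁻¹' Icc 0 1) := measure_mono (fun p hp => (hs₁ hp).1)
  have hν₂I : ν₂ (Icc 0 1) = 1 := by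
    refine le_antisymm prob_le_one ?_
    rw [hν₂, Measure.map_apply measurable_fst measurableSet_Icc]
    calc (1:ENNReal) = β Q₂ := hβQ.symm
      _ ≤ β (Prod.fst ⁻¹' Icc 0 1) := measure_mono (fun p hp => (hs₂ hp).1)
  have hη₁I : η₁ (Icc 0 1) = 1 := by
    refine le_antisymm prob_le_one ?_
    rw [hη₁, Measure.map_apply measurable_snd measurableSet_Icc]
    calc (1:ENNReal) = α Q₁ := hαQ.symm
      _ ≤ α (Prod.snd ⁻¹' Icc 0 1) := measure_mono (fun p hp => (hs₁ hp).2)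
  have hη₂I : η₂ (Icc 0 1) = 1 := by
    refine le_antisymm prob_le_one ?_
    rw [hη₂, Measure.map_apply measurable_snd measurableSet_Icc]
    calc (1:ENNReal) = β Q₂ := hβQ.symm
      _ ≤ β (Prod.snd ⁻¹' Icc 0 1) := measure_mono (fun p hp => (hs₂ hp).2)
  -- recombination arithmetic in ℝ≥0∞
  have hArec : ∀ s : ENNReal, (a - t) * s + t * s = a * s := by
    intro s; rw [← add_mul, tsub_add_cancel_of_le hta]
  have hBrec : ∀ s : ENNReal, (b - t) * s + t * s = b * s := by
    intro s; rw [← add_mul, tsub_add_cancel_of_le htb]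
  have hcanA : ∀ s : ENNReal, a * (a⁻¹ * s) = s := by
    intro s; rw [← mul_assoc, ENNReal.mul_inv_cancel ha0 haT, one_mul]
  have hcanB : ∀ s : ENNReal, b * (b⁻¹ * s) = s := by
    intro s; rw [← mul_assoc, ENNReal.mul_inv_cancel hb0 hbT, one_mul]
  have hinterV : ∀ (B : Set ℝ) (Q : Set (ℝ × ℝ)), Q ⊆ (univ : Set ℝ) ×ˢ Icc (0:ℝ) 1 →
      B ×ˢ (univ : Set ℝ) ∩ Q = (B ×ˢ Icc (0:ℝ) 1) ∩ Q := by
    intro B Q hQ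
    ext p
    simp only [mem_inter_iff, mem_prod, mem_univ, and_true, true_and]
    exact ⟨fun h => ⟨⟨h.1, (hQ h.2).2⟩, h.2⟩, fun h => ⟨h.1.1, h.2⟩⟩
  have hinterH : ∀ (B : Set ℝ) (Q : Set (ℝ × ℝ)), Q ⊆ Icc (0:ℝ) 1 ×ˢ (univ : Set ℝ) →
      (univ : Set ℝ) ×ˢ B ∩ Q = (Icc (0:ℝ) 1 ×ˢ B) ∩ Q := by
    intro B Q hQ
    ext p
    simp only [mem_inter_iff, mem_prod, mem_univ, and_true, true_and]
    exact ⟨fun h => ⟨⟨(hQ h.2).1, h.1⟩, h.2⟩, fun h => ⟨h.1.2, h.2⟩⟩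
  have hdsν : IsDoublyStochastic ν := by
    refine ⟨⟨?_⟩, ?_, ?_⟩
    · rw [hνap univ MeasurableSet.univ]
      simp only [univ_inter, measure_univ, mul_one]
      calc μ (Q₁ ∪ Q₂)ᶜ + (a - t) + (b - t) + t + t
          = μ (Q₁ ∪ Q₂)ᶜ + ((a - t) + t) + ((b - t) + t) := by ring
        _ = μ (Q₁ ∪ Q₂)ᶜ + a + b := by rw [tsub_add_cancel_of_le hta, tsub_add_cancel_of_le htb]
        _ = μ (Q₁ ∪ Q₂) + μ (Q₁ ∪ Q₂)ᶜ := by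
            rw [measure_union hdisj hm₂]; ring
        _ = 1 := by rw [measure_add_measure_compl (hm₁.union hm₂), measure_univ]
    · intro B hB hBsub
      set S := B ×ˢ Icc (0:ℝ) 1 with hSdef
      have hS : MeasurableSet S := hB.prod measurableSet_Icc
      have e1 : (ν₁.prod η₂) S = a⁻¹ * μ (S ∩ Q₁) := by
        rw [hSdef, Measure.prod_prod, hη₂I, mul_one, hν₁ap B hB, hinterV B Q₁ hQ₁sub]
      have e2 : (ν₂.prod η₁) S = b⁻¹ * μ (S ∩ Q₂) := by
        rw [hSdef, Measure.prod_prod, hη₁I, mul_one, hν₂ap B hB, hinterV B Q₂ hQ₂sub]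
      calc ν S = μ (S ∩ (Q₁ ∪ Q₂)ᶜ) + (a - t) * α S + (b - t) * β S
            + t * (ν₁.prod η₂) S + t * (ν₂.prod η₁) S := hνap S hS
        _ = μ (S ∩ (Q₁ ∪ Q₂)ᶜ) + ((a - t) * (a⁻¹ * μ (S ∩ Q₁)) + t * (a⁻¹ * μ (S ∩ Q₁)))
            + ((b - t) * (b⁻¹ * μ (S ∩ Q₂)) + t * (b⁻¹ * μ (S ∩ Q₂))) := by
            rw [hαap S hS, hβap S hS, e1, e2]; ring
        _ = μ (S ∩ (Q₁ ∪ Q₂)ᶜ) + μ (S ∩ Q₁) + μ (S ∩ Q₂) := by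
            rw [hArec, hBrec, hcanA, hcanB]
        _ = μ S := hdecomp S hS
        _ = volume B := hds.2.1 B hB hBsub
    · intro B hB hBsub
      set S := Icc (0:ℝ) 1 ×ˢ B with hSdef
      have hS : MeasurableSet S := measurableSet_Icc.prod hB
      have e1 : (ν₁.prod η₂) S = b⁻¹ * μ (S ∩ Q₂) := by
        rw [hSdef, Measure.prod_prod, hν₁I, one_mul, hη₂ap B hB, hinterH B Q₂ hQ₂sub']
      have e2 : (ν₂.prod η₁) S = a⁻¹ * μ (S ∩ Q₁) := by
        rw [hSdef, Measure.prod_prod, hν₂I, one_mul, hη₁ap B hB, hinterH B Q₁ hQ₁sub']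
      calc ν S = μ (S ∩ (Q₁ ∪ Q₂)ᶜ) + (a - t) * α S + (b - t) * β S
            + t * (ν₁.prod η₂) S + t * (ν₂.prod η₁) S := hνap S hS
        _ = μ (S ∩ (Q₁ ∪ Q₂)ᶜ) + ((a - t) * (a⁻¹ * μ (S ∩ Q₁)) + t * (a⁻¹ * μ (S ∩ Q₁)))
            + ((b - t) * (b⁻¹ * μ (S ∩ Q₂)) + t * (b⁻¹ * μ (S ∩ Q₂))) := by
            rw [hαap S hS, hβap S hS, e1, e2]; ring
        _ = μ (S ∩ (Q₁ ∪ Q₂)ᶜ) + μ (S ∩ Q₁) + μ (S ∩ Q₂) := by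
            rw [hArec, hBrec, hcanA, hcanB]
        _ = μ S := hdecomp S hS
        _ = volume B := hds.2.2 B hB hBsub
  -- integrability helper
  have hintG : ∀ (m : Measure (ℝ × ℝ)), IsFiniteMeasure m → Integrable G m := by
    intro m hm
    exact ⟨hGc.aestronglyMeasurable,
      HasFiniteIntegral.of_bounded (μ := m) (f := G) (C := M)
        (ae_of_all _ fun p => by simpa [Real.norm_eq_abs] using hM p)⟩
  set κ := α.prod β with hκ
  haveI : IsProbabilityMeasure κ := by rw [hκ]; infer_instance
  have hmap₁ : ν₁.prod η₂ = κ.map (fun pq : (ℝ × ℝ) × (ℝ × ℝ) => (pq.1.1, pq.2.2)) := by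
    rw [hν₁, hη₂, hκ, Measure.map_prod_map α β measurable_fst measurable_snd]
    rfl
  have hmap₂ : ν₂.prod η₁ = κ.map (fun pq : (ℝ × ℝ) × (ℝ × ℝ) => (pq.2.1, pq.1.2)) := by
    rw [hν₂, hη₁, Measure.map_prod_map β α measurable_fst measurable_snd, hκ,
      ← Measure.prod_swap,
      Measure.map_map (measurable_fst.prodMap measurable_snd) measurable_swap]
    rfl
  have hmapα : κ.map Prod.fst = α := by
    rw [hκ, Measure.map_fst_prod, measure_univ, one_smul]
  have hmapβ : κ.map Prod.snd = β := by
    rw [hκ, Measure.map_snd_prod, measure_univ, one_smul]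
  have hmbl₁ : Measurable (fun pq : (ℝ × ℝ) × (ℝ × ℝ) => (pq.1.1, pq.2.2)) :=
    (measurable_fst.comp measurable_fst).prodMk (measurable_snd.comp measurable_snd)
  have hmbl₂ : Measurable (fun pq : (ℝ × ℝ) × (ℝ × ℝ) => (pq.2.1, pq.1.2)) :=
    (measurable_fst.comp measurable_snd).prodMk (measurable_snd.comp measurable_fst)
  have hi₁ : ∫ p, G p ∂(ν₁.prod η₂) = ∫ pq, G (pq.1.1, pq.2.2) ∂κ := by
    rw [hmap₁, integral_map hmbl₁.aemeasurable hGc.aestronglyMeasurable]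
  have hi₂ : ∫ p, G p ∂(ν₂.prod η₁) = ∫ pq, G (pq.2.1, pq.1.2) ∂κ := by
    rw [hmap₂, integral_map hmbl₂.aemeasurable hGc.aestronglyMeasurable]
  have hiα : ∫ p, G p ∂α = ∫ pq, G pq.1 ∂κ := by
    rw [← hmapα, integral_map measurable_fst.aemeasurable hGc.aestronglyMeasurable]
  have hiβ : ∫ p, G p ∂β = ∫ pq, G pq.2 ∂κ := by
    rw [← hmapβ, integral_map measurable_snd.aemeasurable hGc.aestronglyMeasurable]
  set H : (ℝ × ℝ) × (ℝ × ℝ) → ℝ :=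
    fun pq => G (pq.1.1, pq.2.2) + G (pq.2.1, pq.1.2) - G pq.1 - G pq.2 with hH
  have hintc : ∀ (f : (ℝ × ℝ) × (ℝ × ℝ) → ℝ × ℝ), Continuous f →
      Integrable (fun pq => G (f pq)) κ := by
    intro f hf
    exact ⟨(hGc.comp hf).aestronglyMeasurable,
      HasFiniteIntegral.of_bounded
        (ae_of_all _ fun p => by simpa [Real.norm_eq_abs] using hM (f p))⟩
  have int₁ : Integrable (fun pq : (ℝ × ℝ) × (ℝ × ℝ) => G (pq.1.1, pq.2.2)) κ :=
    hintc _ (by fun_prop)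
  have int₂ : Integrable (fun pq : (ℝ × ℝ) × (ℝ × ℝ) => G (pq.2.1, pq.1.2)) κ :=
    hintc _ (by fun_prop)
  have int₃ : Integrable (fun pq : (ℝ × ℝ) × (ℝ × ℝ) => G pq.1) κ :=
    hintc _ continuous_fst
  have int₄ : Integrable (fun pq : (ℝ × ℝ) × (ℝ × ℝ) => G pq.2) κ :=
    hintc _ continuous_snd
  have hHint : Integrable H κ := ((int₁.add int₂).sub int₃).sub int₄
  have intA : Integrable (fun pq : (ℝ × ℝ) × (ℝ × ℝ) =>
      G (pq.1.1, pq.2.2) + G (pq.2.1, pq.1.2)) κ := int₁.add int₂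
  have intB : Integrable (fun pq : (ℝ × ℝ) × (ℝ × ℝ) =>
      G (pq.1.1, pq.2.2) + G (pq.2.1, pq.1.2) - G pq.1) κ := intA.sub int₃
  have hHval : ∫ pq, H pq ∂κ = ∫ p, G p ∂(ν₁.prod η₂) + ∫ p, G p ∂(ν₂.prod η₁)
      - ∫ p, G p ∂α - ∫ p, G p ∂β := by
    rw [hi₁, hi₂, hiα, hiβ, hH]
    rw [integral_sub intB int₄, integral_sub intA int₃, integral_add int₁ int₂]
  have hκQ : κ ((Q₁ ×ˢ Q₂)ᶜ) = 0 := by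
    have h1 : κ (Q₁ ×ˢ Q₂) = 1 := by rw [hκ, Measure.prod_prod, hαQ, hβQ, mul_one]
    rw [measure_compl (hm₁.prod hm₂) (measure_ne_top _ _), h1, measure_univ, tsub_self]
  have haeQ : ∀ᵐ pq ∂κ, pq ∈ Q₁ ×ˢ Q₂ := by
    rw [ae_iff]
    exact hκQ
  have haepos : ∀ᵐ pq ∂κ, 0 < H pq := by
    filter_upwards [haeQ] with pq hpq
    have := hgain pq.1 hpq.1 pq.2 hpq.2
    simp only [hH]
    linarith
  have hHpos : 0 < ∫ pq, H pq ∂κ := by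
    rcases (integral_nonneg_of_ae (haepos.mono fun pq h => h.le)).lt_or_eq with h | h
    · exact h
    · exfalso
      have hzero : H =ᵐ[κ] 0 :=
        (integral_eq_zero_iff_of_nonneg_ae (haepos.mono fun pq h => h.le) hHint).1 h.symm
      haveI : (MeasureTheory.ae κ).NeBot := ae_neBot.2 (IsProbabilityMeasure.ne_zero (μ := κ))
      obtain ⟨pq, h1, h2⟩ := (haepos.and hzero).exists
      rw [Pi.zero_apply] at h2
      linarith
  -- finiteness instances
  have hfin_smul : ∀ (c : ENNReal), c ≠ ⊤ → ∀ (m : Measure (ℝ × ℝ)), IsProbabilityMeasure m →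
      IsFiniteMeasure (c • m) := by
    intro c hc m hm
    constructor
    simp only [Measure.smul_apply, measure_univ, smul_eq_mul, mul_one]
    exact lt_top_iff_ne_top.2 hc
  haveI if1 : IsFiniteMeasure ((a - t) • α) :=
    hfin_smul _ (ne_top_of_le_ne_top haT tsub_le_self) _ hαP
  haveI if2 : IsFiniteMeasure ((b - t) • β) :=
    hfin_smul _ (ne_top_of_le_ne_top hbT tsub_le_self) _ hβP
  haveI if3 : IsFiniteMeasure (t • ν₁.prod η₂) := hfin_smul _ htT _ inferInstance
  haveI if4 : IsFiniteMeasure (t • ν₂.prod η₁) := hfin_smul _ htT _ inferInstance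
  haveI if5 : IsFiniteMeasure (a • α) := hfin_smul _ haT _ hαP
  haveI if6 : IsFiniteMeasure (b • β) := hfin_smul _ hbT _ hβP
  haveI iR : IsFiniteMeasure (μ.restrict (Q₁ ∪ Q₂)ᶜ) := by
    constructor
    rw [Measure.restrict_apply_univ]
    calc μ ((Q₁ ∪ Q₂)ᶜ) ≤ μ univ := measure_mono (subset_univ _)
      _ < ⊤ := by rw [measure_univ]; exact ENNReal.one_lt_top
  have hGν : ∫ p, G p ∂ν = ∫ p, G p ∂(μ.restrict (Q₁ ∪ Q₂)ᶜ)
      + (a - t).toReal * ∫ p, G p ∂α + (b - t).toReal * ∫ p, G p ∂β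
      + t.toReal * ∫ p, G p ∂(ν₁.prod η₂) + t.toReal * ∫ p, G p ∂(ν₂.prod η₁) := by
    have g0 := hintG (μ.restrict (Q₁ ∪ Q₂)ᶜ) iR
    have g1 := hintG ((a - t) • α) if1
    have g2 := hintG ((b - t) • β) if2
    have g3 := hintG (t • ν₁.prod η₂) if3
    have g4 := hintG (t • ν₂.prod η₁) if4
    rw [hν]
    rw [integral_add_measure (((g0.add_measure g1).add_measure g2).add_measure g3) g4,
      integral_add_measure ((g0.add_measure g1).add_measure g2) g3,
      integral_add_measure (g0.add_measure g1) g2,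
      integral_add_measure g0 g1]
    simp only [integral_smul_measure, smul_eq_mul]
  have hsplitμ : μ = μ.restrict (Q₁ ∪ Q₂)ᶜ + a • α + b • β := by
    have h1 : μ.restrict Q₁ = a • α := by
      rw [hα, smul_smul, ENNReal.mul_inv_cancel ha0 haT, one_smul]
    have h2 : μ.restrict Q₂ = b • β := by
      rw [hβ, smul_smul, ENNReal.mul_inv_cancel hb0 hbT, one_smul]
    calc μ = μ.restrict (Q₁ ∪ Q₂) + μ.restrict (Q₁ ∪ Q₂)ᶜ :=
          (Measure.restrict_add_restrict_compl (hm₁.union hm₂)).symm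
      _ = μ.restrict Q₁ + μ.restrict Q₂ + μ.restrict (Q₁ ∪ Q₂)ᶜ := by
          rw [Measure.restrict_union hdisj hm₂]
      _ = μ.restrict (Q₁ ∪ Q₂)ᶜ + a • α + b • β := by
          rw [h1, h2]; abel
  have hGμ : ∫ p, G p ∂μ = ∫ p, G p ∂(μ.restrict (Q₁ ∪ Q₂)ᶜ)
      + a.toReal * ∫ p, G p ∂α + b.toReal * ∫ p, G p ∂β := by
    have g0 := hintG (μ.restrict (Q₁ ∪ Q₂)ᶜ) iR
    have g5 := hintG (a • α) if5
    have g6 := hintG (b • β) if6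
    conv_lhs => rw [hsplitμ]
    rw [integral_add_measure (g0.add_measure g5) g6, integral_add_measure g0 g5]
    simp only [integral_smul_measure, smul_eq_mul]
  have habt : (a - t).toReal = a.toReal - t.toReal := ENNReal.toReal_sub_of_le hta haT
  have hbbt : (b - t).toReal = b.toReal - t.toReal := ENNReal.toReal_sub_of_le htb hbT
  have ht_pos : 0 < t.toReal := ENNReal.toReal_pos ht0 htT
  refine ⟨ν, hdsν, ?_⟩
  rw [hGν, hGμ, habt, hbbt]
  have hkey := mul_pos ht_pos hHpos
  rw [hHval] at hkey
  nlinarith [hkey]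

lemma ds_rect_open {μ : Measure (ℝ × ℝ)} (h : IsDoublyStochastic μ) {a b c d : ℝ}
    (hb : b ∈ Icc (0:ℝ) 1) (hd : d ∈ Icc (0:ℝ) 1) :
    μ (Ioo a b ×ˢ Ioo c d) = μ (Ioc a b ×ˢ Ioc c d) := by
  refine le_antisymm (measure_mono (prod_mono Ioo_subset_Ioc_self Ioo_subset_Ioc_self)) ?_
  have hsub : Ioc a b ×ˢ Ioc c d ⊆
      (Ioo a b ×ˢ Ioo c d) ∪ ({b} ×ˢ (univ : Set ℝ)) ∪ ((univ : Set ℝ) ×ˢ {d}) := by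
    rintro ⟨u, v⟩ ⟨⟨hu1, hu2⟩, hv1, hv2⟩
    rcases eq_or_lt_of_le hu2 with h1 | h1
    · exact Or.inl (Or.inr ⟨h1, trivial⟩)
    rcases eq_or_lt_of_le hv2 with h2 | h2
    · exact Or.inr ⟨trivial, h2⟩
    exact Or.inl (Or.inl ⟨⟨hu1, h1⟩, hv1, h2⟩)
  calc μ (Ioc a b ×ˢ Ioc c d) ≤ μ ((Ioo a b ×ˢ Ioo c d) ∪ ({b} ×ˢ (univ : Set ℝ))
        ∪ ((univ : Set ℝ) ×ˢ {d})) := measure_mono hsub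
    _ ≤ μ ((Ioo a b ×ˢ Ioo c d) ∪ ({b} ×ˢ (univ : Set ℝ))) + μ ((univ : Set ℝ) ×ˢ {d}) :=
        measure_union_le _ _
    _ ≤ μ (Ioo a b ×ˢ Ioo c d) + μ ({b} ×ˢ (univ : Set ℝ)) + μ ((univ : Set ℝ) ×ˢ {d}) := by
        gcongr
        exact measure_union_le _ _
    _ = μ (Ioo a b ×ˢ Ioo c d) := by rw [ds_vline h hb, ds_hline h hd]; simp

theorem stmt0 (F : ℝ × ℝ → ℝ)
    (hFcont : ContinuousOn F (Icc (0:ℝ) 1 ×ˢ Icc (0:ℝ) 1))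
    (μstar : Measure (ℝ × ℝ)) (hds : IsDoublyStochastic μstar)
    (hmax : ∀ μ : Measure (ℝ × ℝ), IsDoublyStochastic μ →
      ∫ p, F p ∂μ ≤ ∫ p, F p ∂μstar)
    (C : ℝ → ℝ → ℝ) (hC : ∀ x y, C x y = copulaOf μstar x y)
    (X₁ X₂ Y₁ Y₂ : ℝ)
    (hX₁ : 0 ≤ X₁) (hX : X₁ ≤ X₂) (hX₂ : X₂ ≤ 1)
    (hY₁ : 0 ≤ Y₁) (hY : Y₁ ≤ Y₂) (hY₂ : Y₂ ≤ 1)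
    (hrect : C X₂ Y₂ + C X₁ Y₁ - C X₁ Y₂ - C X₂ Y₁ > 0)
    (hD2 : ∀ x y, x ∈ Ioo X₁ X₂ → y ∈ Ioo Y₁ Y₂ →
      DifferentiableAt ℝ (fun x' => F (x', y)) x ∧
      DifferentiableAt ℝ (fun y' => deriv (fun x' => F (x', y')) x) y ∧
      0 < deriv (fun y' => deriv (fun x' => F (x', y')) x) y) :
    ∀ x ∈ Icc X₁ X₂, ∀ y ∈ Icc Y₁ Y₂,
      C x y = min (C x Y₂ + C X₁ y - C X₁ Y₂) (C x Y₁ + C X₂ y - C X₂ Y₁) := by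
  -- clamped version of F
  set cl : ℝ → ℝ := fun u => max 0 (min u 1) with hcl
  have hclc : Continuous cl := continuous_const.max (continuous_id.min continuous_const)
  have hclmem : ∀ u, cl u ∈ Icc (0:ℝ) 1 :=
    fun u => ⟨le_max_left _ _, max_le (by norm_num) (min_le_right _ _)⟩
  have hcleq : ∀ u ∈ Icc (0:ℝ) 1, cl u = u := by
    intro u hu
    rw [hcl]
    simp only [min_eq_left hu.2, max_eq_right hu.1]
  set F' : ℝ × ℝ → ℝ := fun p => F (cl p.1, cl p.2) with hF'
  have hF'c : Continuous F' := by
    apply hFcont.comp_continuous ((hclc.comp continuous_fst).prodMk (hclc.comp continuous_snd))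
    exact fun p => ⟨hclmem _, hclmem _⟩
  have hF'eq : ∀ p : ℝ × ℝ, p ∈ Icc (0:ℝ) 1 ×ˢ Icc (0:ℝ) 1 → F' p = F p := by
    rintro ⟨u, v⟩ ⟨hu, hv⟩
    simp only [hF', hcleq u hu, hcleq v hv]
  obtain ⟨M, hM⟩ : ∃ M, ∀ p, |F' p| ≤ M := by
    obtain ⟨M, hM⟩ := (isCompact_Icc.prod isCompact_Icc).exists_bound_of_continuousOn
      (hF'c.continuousOn (s := Icc (0:ℝ) 1 ×ˢ Icc (0:ℝ) 1))
    refine ⟨M, fun p => ?_⟩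
    have h1 : F' p = F' (cl p.1, cl p.2) := by
      simp only [hF']
      rw [hcleq (cl p.1) (hclmem _), hcleq (cl p.2) (hclmem _)]
    rw [h1]
    simpa using hM (cl p.1, cl p.2) ⟨hclmem _, hclmem _⟩
  -- integrals of F and F' agree for doubly stochastic measures
  have hint_eq : ∀ ν : Measure (ℝ × ℝ), IsDoublyStochastic ν →
      ∫ p, F p ∂ν = ∫ p, F' p ∂ν := by
    intro ν hν
    apply integral_congr_ae
    have hae : ∀ᵐ p ∂ν, p ∈ Icc (0:ℝ) 1 ×ˢ Icc (0:ℝ) 1 := by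
      rw [ae_iff]
      exact ds_sq_compl hν
    filter_upwards [hae] with p hp
    exact (hF'eq p hp).symm
  have hmax' : ∀ ν : Measure (ℝ × ℝ), IsDoublyStochastic ν →
      ∫ p, F' p ∂ν ≤ ∫ p, F' p ∂μstar := by
    intro ν hν
    rw [← hint_eq ν hν, ← hint_eq μstar hds]
    exact hmax ν hν
  intro x hx y hy
  have hx0 : (0:ℝ) ≤ x := hX₁.trans hx.1
  have hx1 : x ≤ 1 := hx.2.trans hX₂
  have hy0 : (0:ℝ) ≤ y := hY₁.trans hy.1
  have hy1 : y ≤ 1 := hy.2.trans hY₂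
  simp only [hC]
  set Cop := copulaOf μstar with hCop
  have hr₁ := ds_rect hds hX₁ hx.1 hy0 hy.2
  have hr₂ := ds_rect hds hx0 hx.2 hY₁ hy.1
  have hle₁ : Cop x y ≤ Cop x Y₂ + Cop X₁ y - Cop X₁ Y₂ := by
    have := ENNReal.toReal_nonneg (a := μstar (Ioc X₁ x ×ˢ Ioc y Y₂))
    rw [hr₁] at this
    linarith
  have hle₂ : Cop x y ≤ Cop x Y₁ + Cop X₂ y - Cop X₂ Y₁ := by
    have := ENNReal.toReal_nonneg (a := μstar (Ioc x X₂ ×ˢ Ioc Y₁ y))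
    rw [hr₂] at this
    linarith
  by_contra hne
  have hlt : Cop x y < min (Cop x Y₂ + Cop X₁ y - Cop X₁ Y₂) (Cop x Y₁ + Cop X₂ y - Cop X₂ Y₁) :=
    lt_of_le_of_ne (le_min hle₁ hle₂) hne
  rw [lt_min_iff] at hlt
  -- both quadrants have positive mass
  set Q₁ : Set (ℝ × ℝ) := Ioo X₁ x ×ˢ Ioo y Y₂ with hQ₁
  set Q₂ : Set (ℝ × ℝ) := Ioo x X₂ ×ˢ Ioo Y₁ y with hQ₂
  have hm₁ : 0 < μstar Q₁ := by
    rw [hQ₁, ds_rect_open hds ⟨hx0, hx1⟩ ⟨hY₁.trans hY, hY₂⟩]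
    have h1 : 0 < (μstar (Ioc X₁ x ×ˢ Ioc y Y₂)).toReal := by rw [hr₁]; linarith [hlt.1]
    exact (ENNReal.toReal_pos_iff.1 h1).1
  have hm₂ : 0 < μstar Q₂ := by
    rw [hQ₂, ds_rect_open hds ⟨hX₁.trans hX, hX₂⟩ ⟨hy0, hy1⟩]
    have h1 : 0 < (μstar (Ioc x X₂ ×ˢ Ioc Y₁ y)).toReal := by rw [hr₂]; linarith [hlt.2]
    exact (ENNReal.toReal_pos_iff.1 h1).1
  have hgain : ∀ p ∈ Q₁, ∀ q ∈ Q₂, F' p + F' q < F' (p.1, q.2) + F' (q.1, p.2) := by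
    rintro ⟨p1, p2⟩ ⟨hp1, hp2⟩ ⟨q1, q2⟩ ⟨hq1, hq2⟩
    have hp1' : p1 ∈ Ioo X₁ X₂ := ⟨hp1.1, hp1.2.trans_le hx.2⟩
    have hq1' : q1 ∈ Ioo X₁ X₂ := ⟨hx.1.trans_lt hq1.1, hq1.2⟩
    have hp2' : p2 ∈ Ioo Y₁ Y₂ := ⟨hy.1.trans_lt hp2.1, hp2.2⟩
    have hq2' : q2 ∈ Ioo Y₁ Y₂ := ⟨hq2.1, hq2.2.trans_le hy.2⟩
    have key := supermod hD2 hp1' hq1' hp2' hq2' (hp1.2.trans hq1.1) (hq2.2.trans hp2.1)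
    have m1 : (p1, p2) ∈ Icc (0:ℝ) 1 ×ˢ Icc (0:ℝ) 1 :=
      ⟨⟨hX₁.trans hp1'.1.le, hp1'.2.le.trans hX₂⟩, ⟨hY₁.trans hp2'.1.le, hp2'.2.le.trans hY₂⟩⟩
    have m2 : (q1, q2) ∈ Icc (0:ℝ) 1 ×ˢ Icc (0:ℝ) 1 :=
      ⟨⟨hX₁.trans hq1'.1.le, hq1'.2.le.trans hX₂⟩, ⟨hY₁.trans hq2'.1.le, hq2'.2.le.trans hY₂⟩⟩
    have m3 : ((p1 : ℝ), (q2 : ℝ)) ∈ Icc (0:ℝ) 1 ×ˢ Icc (0:ℝ) 1 := ⟨m1.1, m2.2⟩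
    have m4 : ((q1 : ℝ), (p2 : ℝ)) ∈ Icc (0:ℝ) 1 ×ˢ Icc (0:ℝ) 1 := ⟨m2.1, m1.2⟩
    rw [hF'eq _ m1, hF'eq _ m2]
    show F (p1, p2) + F (q1, q2) < F' (p1, q2) + F' (q1, p2)
    rw [hF'eq _ m3, hF'eq _ m4]
    linarith
  have hsub₁ : Q₁ ⊆ Icc (0:ℝ) 1 ×ˢ Icc (0:ℝ) 1 := by
    rintro ⟨u, v⟩ ⟨hu, hv⟩
    exact ⟨⟨hX₁.trans hu.1.le, hu.2.le.trans hx1⟩, ⟨hy0.trans hv.1.le, hv.2.le.trans hY₂⟩⟩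
  have hsub₂ : Q₂ ⊆ Icc (0:ℝ) 1 ×ˢ Icc (0:ℝ) 1 := by
    rintro ⟨u, v⟩ ⟨hu, hv⟩
    exact ⟨⟨hx0.trans hu.1.le, hu.2.le.trans hX₂⟩, ⟨hY₁.trans hv.1.le, hv.2.le.trans hy1⟩⟩
  have hdisj : Disjoint Q₁ Q₂ := by
    rw [Set.disjoint_left]
    rintro ⟨u, v⟩ ⟨hu, _⟩ ⟨hu', _⟩
    exact absurd (hu.2.trans hu'.1) (lt_irrefl u)
  obtain ⟨ν, hdsν, hbetter⟩ := exists_better F' hF'c M hM μstar hds Q₁ Q₂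
    ((measurableSet_Ioo).prod measurableSet_Ioo) ((measurableSet_Ioo).prod measurableSet_Ioo)
    hsub₁ hsub₂ hdisj hm₁ hm₂ hgain
  exact absurd (hmax' ν hdsν) (not_le.2 hbetter)
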